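/- Let V be a real vector space with cone V₊ spanned nonnegatively by a basis, and let u', u'' be linear endomorphisms of V such that u'ξ − ξ ∈ V₊ and u''ξ − ξ ∈ V₊ for all ξ ∈ V₊. Set u = u' ∘ u''. Then the set of fixed vectors of u in V₊ equals the intersection of the sets of fixed vectors of u' and of u'' in V₊: {ξ ∈ V₊ : uξ = ξ} = {ξ ∈ V₊ : u'ξ = ξ} ∩ {ξ ∈ V₊ : u''ξ = ξ}. -/

import Mathlib

theorem stmt3 {ι V : Type*} [AddCommGroup V] [Module ℝ V] (b : Module.Basis ι ℝ V)
    (Vpos : Set V) (hVpos : Vpos = {x : V | ∀ i, 0 ≤ b.repr x i})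
    (u' u'' : V →ₗ[ℝ] V)
    (h' : ∀ ξ ∈ Vpos, u' ξ - ξ ∈ Vpos) (h'' : ∀ ξ ∈ Vpos, u'' ξ - ξ ∈ Vpos)
    (u : V →ₗ[ℝ] V) (hu : u = u' ∘ₗ u'') :
    {ξ ∈ Vpos | u ξ = ξ} = {ξ ∈ Vpos | u' ξ = ξ} ∩ {ξ ∈ Vpos | u'' ξ = ξ} := by
  subst hVpos hu
  ext ξ
  simp only [Set.mem_setOf_eq, Set.mem_inter_iff, LinearMap.coe_comp, Function.comp_apply]
  constructor
  · rintro ⟨hξ, hfix⟩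
    have hη : ∀ i, 0 ≤ b.repr (u'' ξ - ξ) i := h'' ξ hξ
    have hu''ξ : ∀ i, 0 ≤ b.repr (u'' ξ) i := by
      intro i
      have := hη i
      have h2 := hξ i
      simp only [map_sub, Finsupp.sub_apply] at this
      linarith
    have hη2 : ∀ i, 0 ≤ b.repr (u' (u'' ξ) - u'' ξ) i := h' _ hu''ξ
    rw [hfix] at hη2
    have heq : u'' ξ = ξ := by
      apply b.repr.injective
      ext i
      have a := hη i
      have c := hη2 i
      simp only [map_sub, Finsupp.sub_apply] at a c
      linarith
    exact ⟨⟨hξ, by rw [heq] at hfix; exact hfix⟩, hξ, heq⟩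
  · rintro ⟨⟨hξ, h1⟩, _, h2⟩
    exact ⟨hξ, by rw [h2, h1]⟩
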